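/- Let h : ℝⁿ → ℝ be convex and absolutely homogeneous, x ∈ ℝⁿ with ‖x‖ = 1, G ∈ ℝⁿ with ⟨x, G⟩ = 0, and t' ≠ 0. Let z minimize y ↦ |t'|·h(y) + (1/2)·‖y − (x − t' • G)‖² and suppose c := ⟨x, z⟩ ≠ 0. Then the actual step-size t = t'/c satisfies |t| ≥ 1/√((1/t')² + ‖G‖²); in particular t ≠ 0 whenever ‖G‖ is finite. -/

import Mathlib

open RealInnerProductSpace

/-- Lower bound on the actual step-size: with `z = prox_{|t'| h}(x − t' • G)` and
`c = ⟨x, z⟩ ≠ 0`, the actual step-size `t = t'/c` satisfies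
`|t| ≥ 1/√((1/t')² + ‖G‖²)`; in particular `t ≠ 0`. -/
theorem actual_stepsize_lower_bound {n : ℕ} (h : EuclideanSpace ℝ (Fin n) → ℝ)
    (hconv : ConvexOn ℝ Set.univ h)
    (hhom : ∀ (α : ℝ) (x : EuclideanSpace ℝ (Fin n)), h (α • x) = |α| * h x)
    (x G : EuclideanSpace ℝ (Fin n)) (hx : ‖x‖ = 1) (hxG : ⟪x, G⟫ = 0)
    (t' : ℝ) (ht' : t' ≠ 0) (z : EuclideanSpace ℝ (Fin n))
    (hz : ∀ y, |t'| * h z + (1/2) * ‖z - (x - t' • G)‖^2 ≤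
      |t'| * h y + (1/2) * ‖y - (x - t' • G)‖^2)
    (hc : ⟪x, z⟫ ≠ 0) :
    1 / Real.sqrt ((1/t')^2 + ‖G‖^2) ≤ |t' / ⟪x, z⟫| ∧ t' / ⟪x, z⟫ ≠ 0 := by
  set w : EuclideanSpace ℝ (Fin n) := x - t' • G with hwdef
  have h0 : h 0 = 0 := by simpa using hhom 0 x
  have hneg : ∀ y, h (-y) = h y := fun y => by simpa using hhom (-1) y
  have hnn : ∀ y, 0 ≤ h y := by
    intro y
    have := hconv.2 (Set.mem_univ y) (Set.mem_univ (-y))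
      (by norm_num : (0:ℝ) ≤ 1/2) (by norm_num : (0:ℝ) ≤ 1/2) (by norm_num)
    rw [show (1/2:ℝ) • y + (1/2:ℝ) • (-y) = 0 by module, h0, hneg] at this
    simp only [smul_eq_mul] at this
    linarith
  have hzne : z ≠ 0 := fun h' => hc (by simp [h'])
  have hznorm : (0:ℝ) < ‖z‖ := norm_pos_iff.mpr hzne
  have hA : (0:ℝ) < ‖z‖^2 := by positivity
  have hk0 : 0 ≤ |t'| * h z := mul_nonneg (abs_nonneg t') (hnn z)
  have key : ‖z‖^2 ≤ ⟪z, w⟫ := by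
    set p : ℝ := ⟪z, w⟫ with hp
    set k : ℝ := |t'| * h z with hk
    set s : ℝ := p - k with hs
    by_cases hsnn : 0 ≤ s
    · set l : ℝ := s / ‖z‖^2 with hl
      have hl0 : 0 ≤ l := div_nonneg hsnn (le_of_lt hA)
      have hlz : h (l • z) = l * h z := by rw [hhom, abs_of_nonneg hl0]
      have H := hz (l • z)
      have e1 : ‖z - w‖^2 = ‖z‖^2 - 2*p + ‖w‖^2 := norm_sub_sq_real z w
      have e2 : ‖l • z - w‖^2 = l^2*‖z‖^2 - 2*(l*p) + ‖w‖^2 := by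
        rw [norm_sub_sq_real, norm_smul, real_inner_smul_left, Real.norm_eq_abs,
          mul_pow, sq_abs]
      rw [hlz, e1, e2] at H
      have hls : l * ‖z‖^2 = s := div_mul_cancel₀ s (ne_of_gt hA)
      have H' : k + 1/2*(‖z‖^2 - 2*p + ‖w‖^2) ≤
          l*k + 1/2*(l^2*‖z‖^2 - 2*(l*p) + ‖w‖^2) := by
        rw [hk]; linarith [H]
      clear_value p k
      clear hlz e1 e2 hl hl0 H
      clear_value l
      clear_value s
      have HA := mul_le_mul_of_nonneg_left H' (by positivity : (0:ℝ) ≤ 2*‖z‖^2)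
      have m1 : l * ‖z‖^2 * p = s * p := by rw [hls]
      have m2 : l * ‖z‖^2 * k = s * k := by rw [hls]
      have m3 : l^2 * (‖z‖^2)^2 = s^2 := by rw [← hls]; ring
      nlinarith [HA, m1, m2, m3, sq_nonneg (‖z‖^2 - s), hk0, hA]
    · push_neg at hsnn
      have H := hz 0
      have e1 : ‖z - w‖^2 = ‖z‖^2 - 2*p + ‖w‖^2 := norm_sub_sq_real z w
      have e0 : ‖(0:EuclideanSpace ℝ (Fin n)) - w‖^2 = ‖w‖^2 := by simp
      rw [h0, e1, e0] at H
      linarith [hA, hk0]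
  have hzw : ‖z‖ ≤ ‖w‖ := by
    have := real_inner_le_norm z w
    nlinarith [hznorm, norm_nonneg w]
  have hcs : |⟪x, z⟫| ≤ ‖z‖ := by
    have := abs_real_inner_le_norm x z
    simpa [hx] using this
  have hw2 : ‖w‖^2 = 1 + t'^2 * ‖G‖^2 := by
    have e := norm_sub_sq_real x (t' • G)
    rw [norm_smul, real_inner_smul_right, hxG, hx, Real.norm_eq_abs, mul_pow, sq_abs] at e
    rw [hwdef, e]; ring
  have hprod : |t'| * Real.sqrt ((1/t')^2 + ‖G‖^2) = ‖w‖ := by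
    rw [← Real.sqrt_sq_eq_abs, ← Real.sqrt_mul (sq_nonneg t'),
      show t'^2 * ((1/t')^2 + ‖G‖^2) = ‖w‖^2 by rw [hw2]; field_simp]
    exact Real.sqrt_sq (norm_nonneg w)
  have hS : (0:ℝ) < Real.sqrt ((1/t')^2 + ‖G‖^2) := by
    apply Real.sqrt_pos.mpr
    have : (0:ℝ) < (1/t')^2 := by positivity
    nlinarith [sq_nonneg ‖G‖]
  constructor
  · rw [abs_div, div_le_div_iff₀ hS (abs_pos.mpr hc), one_mul]
    calc |⟪x, z⟫| ≤ ‖z‖ := hcs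
      _ ≤ ‖w‖ := hzw
      _ = |t'| * Real.sqrt ((1/t')^2 + ‖G‖^2) := hprod.symm
  · exact div_ne_zero ht' hc
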